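/- Let f ∈ 𝔽_p[u₁,…,u_{d-1}, u_d^{±1}] be such that f_min, the sum of the terms of f whose exponents are minimal with respect to the order m ≺_{e_d} n iff (m₁,…,m_{d−1}) <_lex (n₁,…,n_{d−1}), is a Laurent polynomial in u_d alone that is NOT a single monomial. Let T = {n ∈ ℤ^d : n_i ≥ 0 for some i < d} and m = −e₁−⋯−e_{d−1}. Then there is no polynomial h ∈ 𝔽_p[u₁^{±1},…,u_d^{±1}] and no g supported on T with u^m − g = h·f. -/

import Mathlib

open Finsupp

/-- If `(u, v)` is the unique way (within supports) to write `u + v` as a sum with the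
first summand `u`, then the coefficient of the product at `u + v` is the product of
coefficients. -/
lemma mul_apply_unique_add {R M : Type*} [Semiring R] [AddCommGroup M]
    (x y : AddMonoidAlgebra R M) (u v : M)
    (H : ∀ a ∈ x.coeff.support, ∀ b ∈ y.coeff.support, a + b = u + v → a = u) :
    (x * y).coeff (u + v) = x.coeff u * y.coeff v := by
  classical
  rw [AddMonoidAlgebra.coeff_mul, Finsupp.sum]
  rw [Finset.sum_eq_single u]
  · rw [Finsupp.sum, Finset.sum_eq_single v]
    · simp
    · intro b hb hbv
      rw [if_neg]
      intro hab
      exact hbv (by have := add_left_cancel hab; exact this)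
    · intro hv
      rw [if_pos rfl, Finsupp.notMem_support_iff.mp hv, mul_zero]
  · intro a ha hau
    rw [Finsupp.sum]
    apply Finset.sum_eq_zero
    intro b hb
    rw [if_neg]
    intro hab
    exact hau (H a ha b hb hab)
  · intro hu
    rw [Finsupp.notMem_support_iff.mp hu, Finsupp.sum]
    apply Finset.sum_eq_zero
    intro b _
    simp

/-- The non-divisibility fact behind the nontriviality of the subgroup `Y₀`:
writing exponents of Laurent monomials in `d = e + 1` variables as pairs
`(prefix, last) ∈ ℤ^e × ℤ`, let `f ∈ 𝔽_p[u₁,…,u_{e},u_d^{±1}]` (so the prefixes of its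
support are nonnegative) be such that its lex-minimal part `f_min` is a Laurent polynomial
in the last variable alone which is not a single monomial (at least two terms of `f` have
prefix `0`). With `T = {n : n_i ≥ 0 for some i ≤ e}` and `m = -e₁-⋯-e_e`, there is no
`h` and no `g` supported on `T` with `u^m - g = h·f`. -/
theorem no_coding_of_nonmonomial_min_part (p : ℕ) [Fact p.Prime] (e : ℕ) (he : 1 ≤ e)
    (f : AddMonoidAlgebra (ZMod p) ((Fin e → ℤ) × ℤ))
    (hsupp : ∀ n ∈ f.coeff.support, ∀ i : Fin e, 0 ≤ n.1 i)
    (hmin : ∃ a ∈ f.coeff.support, ∃ b ∈ f.coeff.support, a ≠ b ∧ a.1 = 0 ∧ b.1 = 0) :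
    ∀ g h : AddMonoidAlgebra (ZMod p) ((Fin e → ℤ) × ℤ),
      (↑g.coeff.support ⊆ {n : (Fin e → ℤ) × ℤ | ∃ i : Fin e, 0 ≤ n.1 i}) →
      AddMonoidAlgebra.single (((fun _ => -1 : Fin e → ℤ), (0 : ℤ))) (1 : ZMod p) - g ≠
        h * f := by
  classical
  intro g h hg heq
  haveI : WellFoundedLT (Fin e) := inferInstance
  set m : (Fin e → ℤ) × ℤ := ((fun _ => -1 : Fin e → ℤ), (0 : ℤ)) with hm
  set p1 : ((Fin e → ℤ) × ℤ) → Prop := fun n => ∃ i : Fin e, 0 ≤ n.1 i with hp1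
  set h'' : AddMonoidAlgebra (ZMod p) ((Fin e → ℤ) × ℤ) := AddMonoidAlgebra.ofCoeff (h.coeff.filter p1) with hh''
  set h' : AddMonoidAlgebra (ZMod p) ((Fin e → ℤ) × ℤ) := AddMonoidAlgebra.ofCoeff (h.coeff.filter (fun n => ¬ p1 n)) with hh'
  have hsplit : h'' + h' = h := AddMonoidAlgebra.coeff_injective (Finsupp.filter_pos_add_filter_neg h.coeff p1)
  have hmul : h' * f + h'' * f = h * f := by
    rw [← hsplit, add_mul]; ring
  set G : AddMonoidAlgebra (ZMod p) ((Fin e → ℤ) × ℤ) := g + h'' * f with hG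
  have heq2 : AddMonoidAlgebra.single m (1 : ZMod p) - G = h' * f := by
    rw [hG]
    have : AddMonoidAlgebra.single m (1 : ZMod p) - g = h' * f + h'' * f := by
      rw [hmul]; exact heq
    linear_combination this
  -- support of h' has all-negative prefixes
  have hh'neg : ∀ n ∈ h'.coeff.support, ∀ i : Fin e, n.1 i < 0 := by
    intro n hn i
    rw [hh', AddMonoidAlgebra.coeff_ofCoeff, Finsupp.support_filter, Finset.mem_filter] at hn
    have := hn.2
    simp only [hp1, not_exists, not_le] at this
    exact this i
  -- G vanishes at all-negative prefixes
  have hGzero : ∀ n : (Fin e → ℤ) × ℤ, (∀ i : Fin e, n.1 i < 0) → G.coeff n = 0 := by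
    intro n hn
    rw [hG, AddMonoidAlgebra.coeff_add, Finsupp.add_apply]
    have hg0 : g.coeff n = 0 := by
      by_contra hne
      obtain ⟨i, hi⟩ := hg (Finsupp.mem_support_iff.mpr hne)
      exact absurd hi (not_le.mpr (hn i))
    have hhf0 : (h'' * f).coeff n = 0 := by
      by_contra hne
      have hmem := AddMonoidAlgebra.support_coeff_mul_subset h'' f (Finsupp.mem_support_iff.mpr hne)
      rw [Finset.mem_add] at hmem
      obtain ⟨a, ha, b, hb, hab⟩ := hmem
      rw [hh'', AddMonoidAlgebra.coeff_ofCoeff, Finsupp.support_filter, Finset.mem_filter, hp1] at ha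
      obtain ⟨i, hi⟩ := ha.2
      have hbi := hsupp b hb i
      have : n.1 i = a.1 i + b.1 i := by rw [← hab]; rfl
      have := hn i
      omega
    rw [hg0, hhf0, add_zero]
  -- coefficients of h' * f at all-negative prefixes away from m vanish
  have hkey : ∀ n : (Fin e → ℤ) × ℤ, (∀ i : Fin e, n.1 i < 0) → (h' * f).coeff n ≠ 0 → n = m := by
    intro n hn hne
    by_contra hnm
    apply hne
    rw [← heq2, AddMonoidAlgebra.coeff_sub, Finsupp.sub_apply, hGzero n hn, AddMonoidAlgebra.coeff_single, Finsupp.single_apply, if_neg (fun hc => hnm hc.symm)]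
    simp
  -- main case split
  by_cases hz : h' = 0
  · -- then single m 1 = G, contradiction at m
    have : (AddMonoidAlgebra.single m (1 : ZMod p) - G).coeff m = 0 := by
      rw [heq2, hz, zero_mul]; simp
    rw [AddMonoidAlgebra.coeff_sub, Finsupp.sub_apply, hGzero m (fun i => by simp [hm]), AddMonoidAlgebra.coeff_single, Finsupp.single_apply,
      if_pos rfl, sub_zero] at this
    exact one_ne_zero this
  · -- h' ≠ 0 : set up the lex-minimal prefix
    have hsne : h'.coeff.support.Nonempty := Finsupp.support_nonempty_iff.mpr (mt AddMonoidAlgebra.coeff_eq_zero.mp hz)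
    set P : Finset (Lex (Fin e → ℤ)) := h'.coeff.support.image (fun n => toLex n.1) with hP
    have hPne : P.Nonempty := hsne.image _
    obtain ⟨n0, hn0, hn0π⟩ := Finset.mem_image.mp (P.min'_mem hPne)
    set π : Lex (Fin e → ℤ) := P.min' hPne with hπ
    have hπle : ∀ n ∈ h'.coeff.support, π ≤ toLex n.1 := by
      intro n hn
      exact Finset.min'_le P _ (Finset.mem_image_of_mem _ hn)
    have hn0π' : n0.1 = ofLex π := by rw [← hn0π]; rfl
    have hπneg : ∀ i : Fin e, (ofLex π) i < 0 := by
      intro i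
      have := hh'neg n0 hn0 i
      rwa [hn0π'] at this
    -- the last-coordinate slices
    set Sa : Finset ℤ := (h'.coeff.support.filter (fun n => n.1 = ofLex π)).image Prod.snd with hSa
    have hSamem : ∀ t : ℤ, t ∈ Sa ↔ ((ofLex π, t) : (Fin e → ℤ) × ℤ) ∈ h'.coeff.support := by
      intro t
      constructor
      · intro ht
        obtain ⟨n, hn, hnt⟩ := Finset.mem_image.mp ht
        rw [Finset.mem_filter] at hn
        have hnn : n = (ofLex π, t) := Prod.ext hn.2 hnt
        exact hnn ▸ hn.1
      · intro ht
        exact Finset.mem_image.mpr ⟨_, Finset.mem_filter.mpr ⟨ht, rfl⟩, rfl⟩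
    have hSane : Sa.Nonempty := ⟨n0.2, (hSamem n0.2).mpr (by rwa [← hn0π', Prod.mk.eta])⟩
    set Sf : Finset ℤ := (f.coeff.support.filter (fun n => n.1 = 0)).image Prod.snd with hSf
    have hSfmem : ∀ t : ℤ, t ∈ Sf ↔ (((0 : Fin e → ℤ), t) : (Fin e → ℤ) × ℤ) ∈ f.coeff.support := by
      intro t
      constructor
      · intro ht
        obtain ⟨n, hn, hnt⟩ := Finset.mem_image.mp ht
        rw [Finset.mem_filter] at hn
        have hnn : n = (0, t) := Prod.ext hn.2 hnt
        exact hnn ▸ hn.1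
      · intro ht
        exact Finset.mem_image.mpr ⟨_, Finset.mem_filter.mpr ⟨ht, rfl⟩, rfl⟩
    obtain ⟨fa, hfa, fb, hfb, hfab, hfa1, hfb1⟩ := hmin
    have hfaS : fa.2 ∈ Sf := (hSfmem fa.2).mpr (by rwa [← hfa1, Prod.mk.eta])
    have hfbS : fb.2 ∈ Sf := (hSfmem fb.2).mpr (by rwa [← hfb1, Prod.mk.eta])
    have hSfne : Sf.Nonempty := ⟨fa.2, hfaS⟩
    set a : ℤ := Sa.min' hSane with ha
    set b : ℤ := Sa.max' hSane with hb
    set s : ℤ := Sf.min' hSfne with hs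
    set s' : ℤ := Sf.max' hSfne with hs'
    have hab : a ≤ b := Finset.min'_le _ _ (Finset.max'_mem _ _)
    have hss' : s < s' := by
      have h1 : s ≤ fa.2 := Finset.min'_le _ _ hfaS
      have h2 : s ≤ fb.2 := Finset.min'_le _ _ hfbS
      have h3 : fa.2 ≤ s' := Finset.le_max' _ _ hfaS
      have h4 : fb.2 ≤ s' := Finset.le_max' _ _ hfbS
      have h5 : fa.2 ≠ fb.2 := by
        intro hc
        exact hfab (Prod.ext (hfa1.trans hfb1.symm) hc)
      omega
    have Hmin : ∀ aa ∈ h'.coeff.support, ∀ bb ∈ f.coeff.support,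
        aa + bb = ((ofLex π, a) : (Fin e → ℤ) × ℤ) + ((0 : Fin e → ℤ), s) → aa = (ofLex π, a) := by
      intro aa haa bb hbb habb
      have h1 : aa.1 + bb.1 = ofLex π := by
        have := congrArg Prod.fst habb
        simpa using this
      have h2 : aa.2 + bb.2 = a + s := by
        have := congrArg Prod.snd habb
        simpa using this
      have hbb0 : ∀ i, 0 ≤ bb.1 i := hsupp bb hbb
      have hle : toLex aa.1 ≤ toLex (aa.1 + bb.1) :=
        Pi.toLex_monotone (le_add_of_nonneg_right (Pi.le_def.mpr hbb0))
      rw [h1] at hle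
      have hge : π ≤ toLex aa.1 := hπle aa haa
      have haa1 : aa.1 = ofLex π := by
        have : toLex aa.1 = π := le_antisymm (by simpa using hle) hge
        rw [← this]; rfl
      have hbb1 : bb.1 = 0 := by
        have : aa.1 + bb.1 = aa.1 := by rw [h1, haa1]
        exact add_eq_right.mp (by rwa [add_comm] at this)
      have haam : aa.2 ∈ Sa := (hSamem aa.2).mpr (by rwa [← haa1, Prod.mk.eta])
      have hbbm : bb.2 ∈ Sf := (hSfmem bb.2).mpr (by rwa [← hbb1, Prod.mk.eta])
      have ha2 : a ≤ aa.2 := Finset.min'_le _ _ haam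
      have hs2 : s ≤ bb.2 := Finset.min'_le _ _ hbbm
      have : aa.2 = a := by omega
      exact Prod.ext haa1 this
    have Hmax : ∀ aa ∈ h'.coeff.support, ∀ bb ∈ f.coeff.support,
        aa + bb = ((ofLex π, b) : (Fin e → ℤ) × ℤ) + ((0 : Fin e → ℤ), s') → aa = (ofLex π, b) := by
      intro aa haa bb hbb habb
      have h1 : aa.1 + bb.1 = ofLex π := by
        have := congrArg Prod.fst habb
        simpa using this
      have h2 : aa.2 + bb.2 = b + s' := by
        have := congrArg Prod.snd habb
        simpa using this
      have hbb0 : ∀ i, 0 ≤ bb.1 i := hsupp bb hbb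
      have hle : toLex aa.1 ≤ toLex (aa.1 + bb.1) :=
        Pi.toLex_monotone (le_add_of_nonneg_right (Pi.le_def.mpr hbb0))
      rw [h1] at hle
      have hge : π ≤ toLex aa.1 := hπle aa haa
      have haa1 : aa.1 = ofLex π := by
        have : toLex aa.1 = π := le_antisymm (by simpa using hle) hge
        rw [← this]; rfl
      have hbb1 : bb.1 = 0 := by
        have : aa.1 + bb.1 = aa.1 := by rw [h1, haa1]
        exact add_eq_right.mp (by rwa [add_comm] at this)
      have haam : aa.2 ∈ Sa := (hSamem aa.2).mpr (by rwa [← haa1, Prod.mk.eta])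
      have hbbm : bb.2 ∈ Sf := (hSfmem bb.2).mpr (by rwa [← hbb1, Prod.mk.eta])
      have ha2 : aa.2 ≤ b := Finset.le_max' _ _ haam
      have hs2 : bb.2 ≤ s' := Finset.le_max' _ _ hbbm
      have : aa.2 = b := by omega
      exact Prod.ext haa1 this
    have hamem : ((ofLex π, a) : (Fin e → ℤ) × ℤ) ∈ h'.coeff.support := (hSamem a).mp (Finset.min'_mem _ _)
    have hbmem : ((ofLex π, b) : (Fin e → ℤ) × ℤ) ∈ h'.coeff.support := (hSamem b).mp (Finset.max'_mem _ _)
    have hsmem : (((0 : Fin e → ℤ), s) : (Fin e → ℤ) × ℤ) ∈ f.coeff.support := (hSfmem s).mp (Finset.min'_mem _ _)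
    have hs'mem : (((0 : Fin e → ℤ), s') : (Fin e → ℤ) × ℤ) ∈ f.coeff.support := (hSfmem s').mp (Finset.max'_mem _ _)
    have hc1 : (h' * f).coeff (((ofLex π, a) : (Fin e → ℤ) × ℤ) + ((0 : Fin e → ℤ), s)) ≠ 0 := by
      rw [mul_apply_unique_add h' f _ _ Hmin]
      exact mul_ne_zero (Finsupp.mem_support_iff.mp hamem) (Finsupp.mem_support_iff.mp hsmem)
    have hc2 : (h' * f).coeff (((ofLex π, b) : (Fin e → ℤ) × ℤ) + ((0 : Fin e → ℤ), s')) ≠ 0 := by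
      rw [mul_apply_unique_add h' f _ _ Hmax]
      exact mul_ne_zero (Finsupp.mem_support_iff.mp hbmem) (Finsupp.mem_support_iff.mp hs'mem)
    have hsum1 : ((ofLex π, a) : (Fin e → ℤ) × ℤ) + ((0 : Fin e → ℤ), s) = (ofLex π, a + s) := by
      refine Prod.ext ?_ rfl
      simp
    have hsum2 : ((ofLex π, b) : (Fin e → ℤ) × ℤ) + ((0 : Fin e → ℤ), s') = (ofLex π, b + s') := by
      refine Prod.ext ?_ rfl
      simp
    rw [hsum1] at hc1
    rw [hsum2] at hc2
    have e1 : ((ofLex π, a + s) : (Fin e → ℤ) × ℤ) = m := hkey _ (fun i => hπneg i) hc1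
    have e2 : ((ofLex π, b + s') : (Fin e → ℤ) × ℤ) = m := hkey _ (fun i => hπneg i) hc2
    have : a + s = b + s' := by
      have := (congrArg Prod.snd e1).trans (congrArg Prod.snd e2).symm
      simpa using this
    omega
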